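/- Let F be a solvable polynomial system and let F_1,...,F_{c+1} be copies of F on pairwise disjoint variable sets, together with the polynomial g = x + Σ x_{i,j} where x is a fresh variable. Then for any subset H of G := {g} ∪ F_1 ∪ ... ∪ F_{c+1} with |H| ≤ c, the system G \ H has a common zero if and only if F has a common zero. -/

import Mathlib

/-- The combined system `G = {g} ∪ F₁ ∪ ⋯ ∪ F_{c+1}` built from a system
`f : Fin m → K[x₁,...,xₙ]`: index `none` is the polynomial `g = x + Σ_{i,j} x_{i,j}`
(`x` a fresh variable, indexed by `none` in the variable type), and index `some (i, t)`
is the copy of `f t` on the `i`-th disjoint set of variables. -/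
noncomputable def bigSystem (K : Type*) [Field K] (n m c : ℕ)
    (f : Fin m → MvPolynomial (Fin n) K) :
    Option (Fin (c + 1) × Fin m) → MvPolynomial (Option (Fin (c + 1) × Fin n)) K
  | none => MvPolynomial.X none +
      ∑ i : Fin (c + 1), ∑ j : Fin n, MvPolynomial.X (some (i, j))
  | some (i, t) => MvPolynomial.rename (fun j => some (i, j)) (f t)

/-- For any subset `H` of the combined system of size at most `c`, the system `G \ H` has
a common zero if and only if the original system `F` has a common zero. -/
theorem removed_copies_solvable_iff (K : Type*) [Field K] (n m c : ℕ)
    (f : Fin m → MvPolynomial (Fin n) K)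
    (H : Finset (Option (Fin (c + 1) × Fin m))) (hH : H.card ≤ c) :
    (∃ a : Option (Fin (c + 1) × Fin n) → K,
        ∀ t ∉ H, MvPolynomial.eval a (bigSystem K n m c f t) = 0) ↔
      (∃ b : Fin n → K, ∀ i : Fin m, MvPolynomial.eval b (f i) = 0) := by
  constructor
  · rintro ⟨a, ha⟩
    have hex : ∃ i : Fin (c + 1), ∀ t : Fin m, some (i, t) ∉ H := by
      by_contra h
      push_neg at h
      choose t ht using h
      have hinj : Function.Injective
          (fun i : Fin (c + 1) => (some (i, t i) : Option (Fin (c + 1) × Fin m))) := by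
        intro i j hij
        simpa using (congrArg (fun o => o.map Prod.fst) hij)
      have : c + 1 ≤ H.card := by
        calc c + 1 = Fintype.card (Fin (c + 1)) := by simp
          _ ≤ H.card := Finset.card_le_card_of_injOn _ (fun i _ => ht i) hinj.injOn
      omega
    obtain ⟨i, hi⟩ := hex
    refine ⟨fun j => a (some (i, j)), fun t => ?_⟩
    have := ha (some (i, t)) (hi t)
    simpa [bigSystem, MvPolynomial.eval_rename, Function.comp_def] using this
  · rintro ⟨b, hb⟩
    refine ⟨fun o => o.elim (-(∑ _i : Fin (c + 1), ∑ j : Fin n, b j))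
      (fun p => b p.2), fun t _ => ?_⟩
    match t with
    | none => simp [bigSystem]
    | some (i, t) =>
      simpa [bigSystem, MvPolynomial.eval_rename, Function.comp_def] using hb t
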